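/- For every integer m ≥ 2, the graph P_m is well-covered; moreover every maximal independent set of P_m has cardinality 3. -/
import Mathlib


open scoped Classical

variable {V : Type*}

/-- `S` is an independent set of the induced subgraph of `G` on the vertex set `A`. -/
def IsIndepIn (G : SimpleGraph V) (A S : Finset V) : Prop :=
  S ⊆ A ∧ ∀ u ∈ S, ∀ v ∈ S, ¬ G.Adj u v

/-- `S` is a maximal independent set of the induced subgraph of `G` on the vertex set `A`. -/
def IsMaxIndepIn (G : SimpleGraph V) (A S : Finset V) : Prop :=
  IsIndepIn G A S ∧ ∀ T, IsIndepIn G A T → S ⊆ T → T = S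

/-- The induced subgraph of `G` on the vertex set `A` is well-covered: all of its
maximal independent sets have the same cardinality. -/
def WellCoveredOn (G : SimpleGraph V) (A : Finset V) : Prop :=
  ∀ S T, IsMaxIndepIn G A S → IsMaxIndepIn G A T → S.card = T.card

/-- The closed neighbourhood of `x` deleted from `A`: the vertices of `A` distinct from `x`
and not adjacent to `x`. -/
noncomputable def delClosedNbhd (G : SimpleGraph V) (A : Finset V) (x : V) : Finset V :=
  A.filter fun y => y ≠ x ∧ ¬ G.Adj x y

/-- The induced subgraph of `G` on the vertex set `A` is vertex decomposable: it is
well-covered, and either it has no edges, or some vertex `x ∈ A` is such that deleting `x`,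
respectively the closed neighbourhood of `x`, leaves a vertex decomposable graph. -/
def VertexDecomposableOn (G : SimpleGraph V) (A : Finset V) : Prop :=
  WellCoveredOn G A ∧
    ((∀ u ∈ A, ∀ v ∈ A, ¬ G.Adj u v) ∨
      ∃ x, ∃ _h : x ∈ A,
        VertexDecomposableOn G (A.erase x) ∧
        VertexDecomposableOn G (delClosedNbhd G A x))
termination_by A.card
decreasing_by
  · exact Finset.card_erase_lt_of_mem (by assumption)
  · exact Finset.card_lt_card
      (Finset.filter_ssubset.mpr ⟨x, by assumption, by simp⟩)

/-- A finite simple graph is well-covered if all of its maximal independent sets have the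
same cardinality. -/
def WellCovered (G : SimpleGraph V) [Fintype V] : Prop :=
  WellCoveredOn G Finset.univ

/-- A finite simple graph is vertex decomposable. -/
def VertexDecomposable (G : SimpleGraph V) [Fintype V] : Prop :=
  VertexDecomposableOn G Finset.univ

/-- The set of shedding vertices of `G` : those vertices `x` such that both `G \ x` and
`G \ N[x]` are vertex decomposable. -/
def Shed (G : SimpleGraph V) [Fintype V] : Set V :=
  {x | VertexDecomposableOn G (Finset.univ.erase x) ∧
       VertexDecomposableOn G (delClosedNbhd G Finset.univ x)}

/-- `D` is a dominating set of `G`: every vertex not in `D` is adjacent to a vertex of `D`. -/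
def IsDominatingSet (G : SimpleGraph V) (D : Set V) : Prop :=
  ∀ v, v ∉ D → ∃ u ∈ D, G.Adj u v

/-- A vertex is simplicial if its neighbourhood induces a clique. -/
def IsSimplicialVertex (G : SimpleGraph V) (x : V) : Prop :=
  ∀ u v, G.Adj x u → G.Adj x v → u ≠ v → G.Adj u v

/-- The graph `P_m` on the vertex set `X ⊕ Y ⊕ Z` with `X = Fin (2*m)`, `Y = Fin 2`,
`Z = Fin 3` (all 0-indexed, so the paper's `x_j`, `y_j`, `z_j` are indices `j - 1`).
Its edges are exactly: `X` induces the complete `m`-partite graph `K_{2,…,2}` whose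
complement is the matching pairing `x_{2i}` with `x_{2i+1}`; `y_0` is adjacent to `z_0`
and to every even-indexed vertex of `X`; `y_1` is adjacent to `z_1` and to every
odd-indexed vertex of `X`; and `Z` induces a complete graph `K_3`. -/
def Pgraph (m : ℕ) : SimpleGraph (Fin (2 * m) ⊕ Fin 2 ⊕ Fin 3) :=
  SimpleGraph.fromRel fun p q =>
    match p, q with
    | Sum.inl a, Sum.inl b => a.val / 2 ≠ b.val / 2
    | Sum.inr (Sum.inl y), Sum.inl a => a.val % 2 = y.val
    | Sum.inr (Sum.inl y), Sum.inr (Sum.inr z) => y.val = z.val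
    | Sum.inr (Sum.inr z), Sum.inr (Sum.inr w) => z ≠ w
    | _, _ => False

section Aux
variable {m : ℕ}

lemma adjXX' {a b : Fin (2*m)} : (Pgraph m).Adj (Sum.inl a) (Sum.inl b) ↔ a.val/2 ≠ b.val/2 := by
  simp only [Pgraph, SimpleGraph.fromRel_adj]
  constructor
  · rintro ⟨-, h | h⟩
    exacts [h, Ne.symm h]
  · intro h
    refine ⟨fun he => h (by cases he; rfl), Or.inl h⟩

lemma adjXY' {a : Fin (2*m)} {y : Fin 2} :
    (Pgraph m).Adj (Sum.inl a) (Sum.inr (Sum.inl y)) ↔ a.val % 2 = y.val := by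
  simp only [Pgraph, SimpleGraph.fromRel_adj]
  constructor
  · rintro ⟨-, h | h⟩ <;> simp_all
  · intro h; exact ⟨by simp, Or.inr h⟩

lemma adjYX' {a : Fin (2*m)} {y : Fin 2} :
    (Pgraph m).Adj (Sum.inr (Sum.inl y)) (Sum.inl a) ↔ a.val % 2 = y.val := by
  rw [SimpleGraph.adj_comm]; exact adjXY'

lemma adjXZ' {a : Fin (2*m)} {z : Fin 3} :
    ¬ (Pgraph m).Adj (Sum.inl a) (Sum.inr (Sum.inr z)) := by
  simp [Pgraph, SimpleGraph.fromRel_adj]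

lemma adjZX' {a : Fin (2*m)} {z : Fin 3} :
    ¬ (Pgraph m).Adj (Sum.inr (Sum.inr z)) (Sum.inl a) := by
  rw [SimpleGraph.adj_comm]; exact adjXZ'

lemma adjYY' {y y' : Fin 2} :
    ¬ (Pgraph m).Adj (Sum.inr (Sum.inl y)) (Sum.inr (Sum.inl y')) := by
  simp [Pgraph, SimpleGraph.fromRel_adj]

lemma adjYZ' {y : Fin 2} {z : Fin 3} :
    (Pgraph m).Adj (Sum.inr (Sum.inl y)) (Sum.inr (Sum.inr z)) ↔ y.val = z.val := by
  simp only [Pgraph, SimpleGraph.fromRel_adj]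
  constructor
  · rintro ⟨-, h | h⟩ <;> simp_all
  · intro h; exact ⟨by simp, Or.inl h⟩

lemma adjZY' {y : Fin 2} {z : Fin 3} :
    (Pgraph m).Adj (Sum.inr (Sum.inr z)) (Sum.inr (Sum.inl y)) ↔ y.val = z.val := by
  rw [SimpleGraph.adj_comm]; exact adjYZ'

lemma adjZZ' {z w : Fin 3} :
    (Pgraph m).Adj (Sum.inr (Sum.inr z)) (Sum.inr (Sum.inr w)) ↔ z ≠ w := by
  simp only [Pgraph, SimpleGraph.fromRel_adj]
  constructor
  · rintro ⟨-, h | h⟩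
    exacts [h, Ne.symm h]
  · intro h; exact ⟨by simpa using h, Or.inl h⟩

lemma insert_contra [Fintype V] {G : SimpleGraph V} {S : Finset V}
    (h : IsMaxIndepIn G Finset.univ S) {w : V} (hw : w ∉ S)
    (hadj : ∀ u ∈ S, ¬ G.Adj w u) : False := by
  have hT : IsIndepIn G Finset.univ (insert w S) := by
    refine ⟨Finset.subset_univ _, ?_⟩
    intro u hu v hv
    rcases Finset.mem_insert.mp hu with h1 | h1
    · rcases Finset.mem_insert.mp hv with h2 | h2
      · rw [h1, h2]; exact G.irrefl
      · rw [h1]; exact hadj v h2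
    · rcases Finset.mem_insert.mp hv with h2 | h2
      · rw [h2]; exact fun h' => hadj u h1 h'.symm
      · exact h.1.2 u h1 v h2
  have := h.2 _ hT (Finset.subset_insert _ _)
  exact hw (this ▸ Finset.mem_insert_self w S)

lemma maxIndep_card (m : ℕ) (hm : 2 ≤ m)
    (S : Finset (Fin (2*m) ⊕ Fin 2 ⊕ Fin 3))
    (hS : IsMaxIndepIn (Pgraph m) Finset.univ S) : S.card = 3 := by
  classical
  set isZ : (Fin (2*m) ⊕ Fin 2 ⊕ Fin 3) → Prop :=
    fun v => ∃ z, v = Sum.inr (Sum.inr z) with hisZ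
  set B := S.filter isZ with hBdef
  set A := S.filter (fun v => ¬ isZ v) with hAdef
  have hind := hS.1.2
  have hmemA : ∀ v ∈ A, v ∈ S := fun v hv => (Finset.mem_filter.mp hv).1
  have hcards : B.card + A.card = S.card :=
    Finset.card_filter_add_card_filter_not (p := isZ)
  -- B has at most one element
  have hB1 : B.card ≤ 1 := by
    rw [Finset.card_le_one]
    intro u hu v hv
    obtain ⟨huS, z, rfl⟩ := Finset.mem_filter.mp hu
    obtain ⟨hvS, z', rfl⟩ := Finset.mem_filter.mp hv
    have := hind _ huS _ hvS
    rw [adjZZ', not_not] at this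
    rw [this]
  -- B is nonempty
  have hBne : B.Nonempty := by
    by_contra hB
    rw [Finset.not_nonempty_iff_eq_empty] at hB
    have hnoZ : ∀ z : Fin 3, Sum.inr (Sum.inr z) ∉ S := by
      intro z hz
      have : Sum.inr (Sum.inr z) ∈ B := Finset.mem_filter.mpr ⟨hz, z, rfl⟩
      simp [hB] at this
    refine insert_contra hS (w := Sum.inr (Sum.inr 2)) (hnoZ 2) ?_
    intro u hu
    rcases u with a | (y | z)
    · exact adjZX'
    · rw [adjZY']
      have := y.isLt
      omega
    · exact fun _ => hnoZ z hu
  obtain ⟨zv, hzv⟩ := hBne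
  obtain ⟨hzS, z, rfl⟩ := Finset.mem_filter.mp hzv
  -- shape of elements of A
  have shape : ∀ v ∈ A, (∃ a : Fin (2*m), v = Sum.inl a) ∨
      (∃ y : Fin 2, v = Sum.inr (Sum.inl y)) := by
    intro v hv
    rcases Finset.mem_filter.mp hv with ⟨-, hz⟩
    rcases v with a | (y | z')
    · exact Or.inl ⟨a, rfl⟩
    · exact Or.inr ⟨y, rfl⟩
    · exact absurd ⟨z', rfl⟩ hz
  -- A has at most 2 elements
  have hA2 : A.card ≤ 2 := by
    by_contra hA
    push_neg at hA
    obtain ⟨u, v, w, hu, hv, hw, huv, huw, hvw⟩ := Finset.two_lt_card_iff.mp hA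
    have hy2 : ∀ y : Fin 2, y.val < 2 := fun y => y.isLt
    rcases shape u hu with ⟨a, rfl⟩ | ⟨ya, rfl⟩ <;>
      rcases shape v hv with ⟨b, rfl⟩ | ⟨yb, rfl⟩ <;>
      rcases shape w hw with ⟨c, rfl⟩ | ⟨yc, rfl⟩
    all_goals (
      have n1 := hind _ (hmemA _ hu) _ (hmemA _ hv)
      have n2 := hind _ (hmemA _ hu) _ (hmemA _ hw)
      have n3 := hind _ (hmemA _ hv) _ (hmemA _ hw)
      simp only [adjXX', adjXY', adjYX', adjYY', not_not, ne_eq, Sum.inl.injEq,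
        Sum.inr.injEq, Fin.ext_iff, not_false_eq_true, not_true] at n1 n2 n3 huv huw hvw
      omega)
  -- A has at least 2 elements
  have hA2' : 2 ≤ A.card := by
    by_contra hA
    push_neg at hA
    have huniq : ∀ u ∈ A, ∀ v ∈ A, u = v := Finset.card_le_one.mp (by omega)
    by_cases hx : ∃ a : Fin (2*m), Sum.inl a ∈ S
    · obtain ⟨a, haS⟩ := hx
      have haA : (Sum.inl a : Fin (2*m) ⊕ Fin 2 ⊕ Fin 3) ∈ A :=
        Finset.mem_filter.mpr ⟨haS, by simp [hisZ]⟩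
      have hbval : 2*(a.val/2) + (1 - a.val % 2) < 2*m := by
        have := a.isLt; omega
      set b : Fin (2*m) := ⟨2*(a.val/2) + (1 - a.val % 2), hbval⟩ with hbdef
      have hbS : (Sum.inl b : Fin (2*m) ⊕ Fin 2 ⊕ Fin 3) ∉ S := by
        intro hb
        have hbA : (Sum.inl b : Fin (2*m) ⊕ Fin 2 ⊕ Fin 3) ∈ A :=
          Finset.mem_filter.mpr ⟨hb, by simp [hisZ]⟩
        have := huniq _ hbA _ haA
        simp only [Sum.inl.injEq, Fin.ext_iff, hbdef] at this
        omega
      refine insert_contra hS hbS ?_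
      intro u hu
      have hushape : u ∈ A ∨ ∃ z' : Fin 3, u = Sum.inr (Sum.inr z') := by
        by_cases h : isZ u
        · exact Or.inr h
        · exact Or.inl (Finset.mem_filter.mpr ⟨hu, h⟩)
      rcases hushape with huA | ⟨z', rfl⟩
      · have := huniq _ huA _ haA
        subst this
        rw [adjXX']
        simp only [hbdef, not_not]
        omega
      · exact adjXZ'
    · by_cases hy : ∃ y : Fin 2, Sum.inr (Sum.inl y) ∈ S
      · obtain ⟨y, hyS⟩ := hy
        have hyA : (Sum.inr (Sum.inl y) : Fin (2*m) ⊕ Fin 2 ⊕ Fin 3) ∈ A :=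
          Finset.mem_filter.mpr ⟨hyS, by simp [hisZ]⟩
        have hcval : 1 - y.val < 2*m := by omega
        set c : Fin (2*m) := ⟨1 - y.val, hcval⟩ with hcdef
        have hcS : (Sum.inl c : Fin (2*m) ⊕ Fin 2 ⊕ Fin 3) ∉ S :=
          fun h => hx ⟨c, h⟩
        refine insert_contra hS hcS ?_
        intro u hu
        have hushape : u ∈ A ∨ ∃ z' : Fin 3, u = Sum.inr (Sum.inr z') := by
          by_cases h : isZ u
          · exact Or.inr h
          · exact Or.inl (Finset.mem_filter.mpr ⟨hu, h⟩)
        rcases hushape with huA | ⟨z', rfl⟩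
        · have := huniq _ huA _ hyA
          subst this
          rw [adjXY']
          have := y.isLt
          simp only [hcdef]
          omega
        · exact adjXZ'
      · have h0val : 0 < 2*m := by omega
        set c : Fin (2*m) := ⟨0, h0val⟩ with hcdef
        have hcS : (Sum.inl c : Fin (2*m) ⊕ Fin 2 ⊕ Fin 3) ∉ S :=
          fun h => hx ⟨c, h⟩
        refine insert_contra hS hcS ?_
        intro u hu
        rcases u with a | (y' | z')
        · exact absurd ⟨a, hu⟩ hx
        · exact absurd ⟨y', hu⟩ hy
        · exact adjXZ'
  have hB1' : 1 ≤ B.card := Finset.card_pos.mpr ⟨_, hzv⟩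
  omega

end Aux

/-- For every `m ≥ 2`, the graph `P_m` is well-covered, and every maximal
independent set of `P_m` has cardinality `3`. -/
theorem statement15 (m : ℕ) (hm : 2 ≤ m) :
    WellCovered (Pgraph m) ∧
    ∀ S, IsMaxIndepIn (Pgraph m) Finset.univ S → S.card = 3 := by
  have main : ∀ S, IsMaxIndepIn (Pgraph m) Finset.univ S → S.card = 3 :=
    fun S hS => maxIndep_card m hm S hS
  exact ⟨fun S T hS hT => (main S hS).trans (main T hT).symm, main⟩
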